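/- For every parameter h ∈ [1/2, 1], the diffusion coefficient of the modified lifted map M̂_h (obtained from the lifted Bernoulli shift by changing the gradient and chopping up its first branch) exists and equals 1/2: lim_{n→∞} (1/(2n)) ∫_0^1 (M̂_h^n(x) − x)² dx = 1/2. Thus the diffusion coefficient is unchanged from that of the lifted Bernoulli shift map on this parameter range despite the drastic alteration of the microscopic dynamics. -/

import Mathlib

open Filter
open MeasureTheory intervalIntegral

/-- The modified lifted map `M̂_h`, obtained from the lifted Bernoulli shift by
changing the gradient and chopping up its first branch. -/
noncomputable def liftMhat (h x : ℝ) : ℝ :=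
  if Int.fract x < (1-h)/2 then (⌊x⌋ : ℝ) + (-2 * Int.fract x + 1)
  else if Int.fract x < 1/2 then (⌊x⌋ : ℝ) + (-2 * Int.fract x + 2)
  else (⌊x⌋ : ℝ) + (2 * Int.fract x - 1 - h)

noncomputable def mhPhi (h x : ℝ) : ℝ := Int.fract x - (if h < Int.fract x then 1 else 0)

noncomputable def mhDel (h x : ℝ) : ℝ :=
  liftMhat h x - x - mhPhi h (liftMhat h x) + mhPhi h x

lemma mh_meas (h : ℝ) : Measurable (liftMhat h) := by
  have hfl : Measurable (fun x : ℝ => (⌊x⌋ : ℝ)) := by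
    have : (fun x : ℝ => (⌊x⌋ : ℝ)) = fun x : ℝ => x - Int.fract x := by
      funext x; rw [Int.self_sub_fract]
    rw [this]; exact measurable_id.sub measurable_fract
  unfold liftMhat
  refine Measurable.ite (measurableSet_lt measurable_fract measurable_const) ?_
    (Measurable.ite (measurableSet_lt measurable_fract measurable_const) ?_ ?_)
  · exact hfl.add ((measurable_const.mul measurable_fract).add measurable_const)
  · exact hfl.add ((measurable_const.mul measurable_fract).add measurable_const)
  · exact hfl.add (((measurable_const.mul measurable_fract).sub measurable_const).sub
      measurable_const)

lemma phi_meas (h : ℝ) : Measurable (mhPhi h) := by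
  unfold mhPhi
  exact measurable_fract.sub
    (Measurable.ite (measurableSet_lt measurable_const measurable_fract)
      measurable_const measurable_const)

lemma del_meas (h : ℝ) : Measurable (mhDel h) := by
  unfold mhDel
  exact (((mh_meas h).sub measurable_id).sub ((phi_meas h).comp (mh_meas h))).add (phi_meas h)

lemma mh_add_one (h x : ℝ) : liftMhat h (x + 1) = liftMhat h x + 1 := by
  have h1 : Int.fract (x + 1) = Int.fract x := Int.fract_add_one x
  have h2 : ((⌊x + 1⌋ : ℤ) : ℝ) = (⌊x⌋ : ℝ) + 1 := by
    rw [Int.floor_add_one]; push_cast; ring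
  unfold liftMhat
  rw [h1, h2]
  split_ifs <;> ring

lemma mh_iter_add_one (h : ℝ) (n : ℕ) (x : ℝ) :
    (liftMhat h)^[n] (x + 1) = (liftMhat h)^[n] x + 1 := by
  induction n with
  | zero => simp
  | succ n ih => rw [Function.iterate_succ_apply', Function.iterate_succ_apply', ih, mh_add_one]

lemma phi_add_one (h x : ℝ) : mhPhi h (x + 1) = mhPhi h x := by
  unfold mhPhi; rw [Int.fract_add_one]

lemma phi_bound (h x : ℝ) : |mhPhi h x| ≤ 1 := by
  have h0 := Int.fract_nonneg x
  have h1 := Int.fract_lt_one x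
  unfold mhPhi
  rw [abs_le]; split_ifs <;> constructor <;> linarith

lemma del_add_one (h x : ℝ) : mhDel h (x + 1) = mhDel h x := by
  unfold mhDel
  rw [mh_add_one, phi_add_one, phi_add_one]; ring

lemma mh_sub_bound (h : ℝ) (hh : h ∈ Set.Icc (1/2:ℝ) 1) (x : ℝ) : |liftMhat h x - x| ≤ 2 := by
  obtain ⟨h1, h2⟩ := hh
  have h0 := Int.fract_nonneg x
  have h1' := Int.fract_lt_one x
  have hfl : (⌊x⌋ : ℝ) = x - Int.fract x := by rw [Int.self_sub_fract]
  unfold liftMhat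
  rw [hfl, abs_le]
  split_ifs <;> constructor <;> linarith

lemma del_bound (h : ℝ) (hh : h ∈ Set.Icc (1/2:ℝ) 1) (x : ℝ) : |mhDel h x| ≤ 4 := by
  have b1 := mh_sub_bound h hh x
  have b2 := phi_bound h (liftMhat h x)
  have b3 := phi_bound h x
  unfold mhDel
  rw [abs_le] at *
  constructor <;> linarith [b1.1, b1.2, b2.1, b2.2, b3.1, b3.2]

lemma floor_zero_of_Ioo {x : ℝ} (hx : x ∈ Set.Ioo (0:ℝ) 1) : (⌊x⌋ : ℝ) = 0 := by
  have : ⌊x⌋ = 0 := Int.floor_eq_zero_iff.mpr ⟨hx.1.le, hx.2⟩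
  rw [this]; norm_num

lemma fract_self_of_Ioo {x : ℝ} (hx : x ∈ Set.Ioo (0:ℝ) 1) : Int.fract x = x :=
  Int.fract_eq_self.mpr ⟨hx.1.le, hx.2⟩

/-- The key pointwise computation: `mhDel` is `±1` on `(0,1)`. -/
lemma del_eq (h : ℝ) (hh : h ∈ Set.Icc (1/2:ℝ) 1) {x : ℝ} (hx : x ∈ Set.Ioo (0:ℝ) 1) :
    mhDel h x = if x < 1/2 then 1 else -1 := by
  obtain ⟨hh1, hh2⟩ := hh
  obtain ⟨hx0, hx1⟩ := hx
  have hfx : Int.fract x = x := fract_self_of_Ioo ⟨hx0, hx1⟩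
  have hfl : (⌊x⌋ : ℝ) = 0 := floor_zero_of_Ioo ⟨hx0, hx1⟩
  rcases lt_or_ge x ((1-h)/2) with hc1 | hc1
  · -- branch 1 : F x = 1 - 2x ∈ (h, 1)
    have hF : liftMhat h x = 1 - 2*x := by
      unfold liftMhat; rw [hfx, if_pos hc1, hfl]; ring
    have hfF : Int.fract (1 - 2*x) = 1 - 2*x :=
      Int.fract_eq_self.mpr ⟨by linarith, by linarith⟩
    have hxh : x < 1/2 := by linarith
    unfold mhDel mhPhi
    rw [hF, hfF, hfx, if_pos (show h < 1 - 2*x by linarith),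
      if_neg (show ¬ h < x by push_neg; linarith), if_pos hxh]
    ring
  · rcases lt_or_ge x (1/2) with hc2 | hc2
    · -- branch 2 : F x = 2 - 2x ∈ (1, 1+h]
      have hF : liftMhat h x = 2 - 2*x := by
        unfold liftMhat; rw [hfx, if_neg (not_lt.mpr hc1), if_pos hc2, hfl]; ring
      have hfF : Int.fract (2 - 2*x) = 1 - 2*x := by
        rw [show (2 - 2*x) = (1 - 2*x) + 1 by ring, Int.fract_add_one]
        exact Int.fract_eq_self.mpr ⟨by linarith, by linarith⟩
      unfold mhDel mhPhi
      rw [hF, hfF, hfx, if_neg (show ¬ h < 1 - 2*x by push_neg; linarith),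
        if_neg (show ¬ h < x by push_neg; linarith), if_pos hc2]
      ring
    · -- branch 3 : F x = 2x - 1 - h
      have hF : liftMhat h x = 2*x - 1 - h := by
        unfold liftMhat
        rw [hfx, if_neg (show ¬ x < (1-h)/2 by push_neg; linarith), if_neg (not_lt.mpr hc2), hfl]
        ring
      rcases lt_or_ge x ((1+h)/2) with hc3 | hc3
      · -- 3a : fract (F x) = 2x - h
        have hfF : Int.fract (2*x - 1 - h) = 2*x - h := by
          rw [show (2*x - 1 - h) = (2*x - h) - ((1:ℤ):ℝ) by push_cast; ring, Int.fract_sub_intCast]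
          exact Int.fract_eq_self.mpr ⟨by linarith, by linarith⟩
        have hiff : (h < 2*x - h) ↔ (h < x) := by constructor <;> intro <;> linarith
        unfold mhDel mhPhi
        rw [hF, hfF, hfx, if_congr hiff rfl rfl, if_neg (not_lt.mpr hc2)]
        split_ifs <;> ring
      · -- 3b : fract (F x) = 2x - 1 - h, and h < 1
        have hhlt : h < 1 := by linarith
        have hfF : Int.fract (2*x - 1 - h) = 2*x - 1 - h :=
          Int.fract_eq_self.mpr ⟨by linarith, by linarith⟩
        unfold mhDel mhPhi
        rw [hF, hfF, hfx, if_neg (show ¬ h < 2*x - 1 - h by push_neg; linarith),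
          if_pos (show h < x by linarith), if_neg (not_lt.mpr hc2)]
        ring

/-- Congruence of interval integrals for functions agreeing on the open interval. -/
lemma integral_congr_Ioo {a b : ℝ} (hab : a ≤ b) {f g : ℝ → ℝ}
    (hfg : ∀ x ∈ Set.Ioo a b, f x = g x) :
    ∫ x in a..b, f x = ∫ x in a..b, g x := by
  apply intervalIntegral.integral_congr_ae
  have hb : (volume : Measure ℝ) {b} = 0 := measure_singleton b
  have ha : (volume : Measure ℝ) {a} = 0 := measure_singleton a
  filter_upwards [compl_mem_ae_iff.mpr hb, compl_mem_ae_iff.mpr ha] with x hxb hxa hxI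
  rw [Set.uIoc_of_le hab] at hxI
  refine hfg x ⟨hxI.1, lt_of_le_of_ne hxI.2 ?_⟩
  simpa using hxb

lemma bdd_ii {f : ℝ → ℝ} (hm : Measurable f) {C : ℝ} (hb : ∀ x, |f x| ≤ C) (a b : ℝ) :
    IntervalIntegrable f volume a b := by
  rw [intervalIntegrable_iff]
  refine MeasureTheory.Integrable.mono' (g := fun _ => C)
    (integrableOn_const measure_Ioc_lt_top.ne) hm.aestronglyMeasurable
    (MeasureTheory.ae_of_all _ (fun x => by simpa using hb x))

/-- Invariance of Lebesgue measure on the circle under the map. -/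
lemma invA (h : ℝ) (hh : h ∈ Set.Icc (1/2:ℝ) 1) {ψ : ℝ → ℝ} (hm : Measurable ψ) {C : ℝ} (hb : ∀ x, |ψ x| ≤ C)
    (hp : ∀ x, ψ (x + 1) = ψ x) :
    ∫ x in (0:ℝ)..1, ψ (liftMhat h x) = ∫ x in (0:ℝ)..1, ψ x := by
  have hcomp : Measurable fun x => ψ (liftMhat h x) := hm.comp (mh_meas h)
  have hbc : ∀ x, |ψ (liftMhat h x)| ≤ C := fun x => hb _
  have hsplit : ∫ x in (0:ℝ)..1, ψ (liftMhat h x) =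
      (∫ x in (0:ℝ)..(1/2), ψ (liftMhat h x)) + ∫ x in (1/2:ℝ)..1, ψ (liftMhat h x) :=
    (intervalIntegral.integral_add_adjacent_intervals
      (bdd_ii hcomp hbc _ _) (bdd_ii hcomp hbc _ _)).symm
  have e1 : ∫ x in (0:ℝ)..(1/2), ψ (liftMhat h x)
      = ∫ x in (0:ℝ)..(1/2), ψ ((-2) * x + 1) := by
    refine integral_congr_Ioo (by norm_num) (fun x hx => ?_)
    obtain ⟨hx0, hx1⟩ := hx
    have hx1' : x < 1 := by linarith
    have hfx : Int.fract x = x := fract_self_of_Ioo ⟨hx0, hx1'⟩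
    have hfl : (⌊x⌋ : ℝ) = 0 := floor_zero_of_Ioo ⟨hx0, hx1'⟩
    rcases lt_or_ge x ((1-h)/2) with hc | hc
    · have hF : liftMhat h x = (-2) * x + 1 := by
        unfold liftMhat; rw [hfx, if_pos hc, hfl]; ring
      rw [hF]
    · have hF : liftMhat h x = ((-2) * x + 1) + 1 := by
        unfold liftMhat; rw [hfx, if_neg (not_lt.mpr hc), if_pos hx1, hfl]; ring
      rw [hF, hp]
  have e2 : ∫ x in (1/2:ℝ)..1, ψ (liftMhat h x)
      = ∫ x in (1/2:ℝ)..1, ψ (2 * x + (-1 - h)) := by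
    refine integral_congr_Ioo (by norm_num) (fun x hx => ?_)
    obtain ⟨hx0, hx1⟩ := hx
    have hx0' : (0:ℝ) < x := by linarith
    have hfx : Int.fract x = x := fract_self_of_Ioo ⟨hx0', hx1⟩
    have hfl : (⌊x⌋ : ℝ) = 0 := floor_zero_of_Ioo ⟨hx0', hx1⟩
    have hF : liftMhat h x = 2 * x + (-1 - h) := by
      unfold liftMhat
      have hh1 := hh.1
      rw [hfx, if_neg (show ¬ x < (1-h)/2 by push_neg; linarith),
        if_neg (show ¬ x < 1/2 by push_neg; linarith), hfl]
      ring
    rw [hF]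
  have s1 : ∫ x in (0:ℝ)..(1/2), ψ ((-2) * x + 1)
      = (2⁻¹ : ℝ) * ∫ x in (0:ℝ)..1, ψ x := by
    rw [intervalIntegral.integral_comp_mul_add ψ (show (-2:ℝ) ≠ 0 by norm_num) 1]
    have e3 : ((-2:ℝ) * 0 + 1) = 1 := by ring
    have e4 : ((-2:ℝ) * (1/2) + 1) = 0 := by ring
    rw [e3, e4, intervalIntegral.integral_symm, smul_eq_mul]
    ring
  have s2 : ∫ x in (1/2:ℝ)..1, ψ (2 * x + (-1 - h))
      = (2⁻¹ : ℝ) * ∫ x in (0:ℝ)..1, ψ x := by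
    rw [intervalIntegral.integral_comp_mul_add ψ (show (2:ℝ) ≠ 0 by norm_num) (-1-h)]
    have hper : Function.Periodic ψ 1 := hp
    have e3 : (2 * (1/2:ℝ) + (-1-h)) = -h := by ring
    have e4 : (2 * (1:ℝ) + (-1-h)) = -h + 1 := by ring
    rw [e3, e4, hper.intervalIntegral_add_eq (-h) 0]
    norm_num [smul_eq_mul]
  rw [hsplit, e1, e2, s1, s2]; ring

/-- Reverse-martingale property: the weight `mhDel` integrates any pulled-back
periodic observable to zero. -/
lemma invB (h : ℝ) (hh : h ∈ Set.Icc (1/2:ℝ) 1) {ψ : ℝ → ℝ} (hm : Measurable ψ) {C : ℝ}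
    (hb : ∀ x, |ψ x| ≤ C) (hp : ∀ x, ψ (x + 1) = ψ x) :
    ∫ x in (0:ℝ)..1, ψ (liftMhat h x) * mhDel h x = 0 := by
  have hC : 0 ≤ C := le_trans (abs_nonneg _) (hb 0)
  have hcomp : Measurable fun x => ψ (liftMhat h x) * mhDel h x :=
    (hm.comp (mh_meas h)).mul (del_meas h)
  have hbc : ∀ x, |ψ (liftMhat h x) * mhDel h x| ≤ C * 4 := fun x => by
    rw [abs_mul]
    exact mul_le_mul (hb _) (del_bound h hh x) (abs_nonneg _) hC
  have hsplit : ∫ x in (0:ℝ)..1, ψ (liftMhat h x) * mhDel h x =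
      (∫ x in (0:ℝ)..(1/2), ψ (liftMhat h x) * mhDel h x)
        + ∫ x in (1/2:ℝ)..1, ψ (liftMhat h x) * mhDel h x :=
    (intervalIntegral.integral_add_adjacent_intervals
      (bdd_ii hcomp hbc _ _) (bdd_ii hcomp hbc _ _)).symm
  have e1 : ∫ x in (0:ℝ)..(1/2), ψ (liftMhat h x) * mhDel h x
      = ∫ x in (0:ℝ)..(1/2), ψ ((-2) * x + 1) := by
    refine integral_congr_Ioo (by norm_num) (fun x hx => ?_)
    obtain ⟨hx0, hx1⟩ := hx
    have hx1' : x < 1 := by linarith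
    have hfx : Int.fract x = x := fract_self_of_Ioo ⟨hx0, hx1'⟩
    have hfl : (⌊x⌋ : ℝ) = 0 := floor_zero_of_Ioo ⟨hx0, hx1'⟩
    have hdel : mhDel h x = 1 := by rw [del_eq h hh ⟨hx0, hx1'⟩, if_pos hx1]
    rw [hdel, mul_one]
    rcases lt_or_ge x ((1-h)/2) with hc | hc
    · have hF : liftMhat h x = (-2) * x + 1 := by
        unfold liftMhat; rw [hfx, if_pos hc, hfl]; ring
      rw [hF]
    · have hF : liftMhat h x = ((-2) * x + 1) + 1 := by
        unfold liftMhat; rw [hfx, if_neg (not_lt.mpr hc), if_pos hx1, hfl]; ring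
      rw [hF, hp]
  have e2 : ∫ x in (1/2:ℝ)..1, ψ (liftMhat h x) * mhDel h x
      = ∫ x in (1/2:ℝ)..1, -ψ (2 * x + (-1 - h)) := by
    refine integral_congr_Ioo (by norm_num) (fun x hx => ?_)
    obtain ⟨hx0, hx1⟩ := hx
    have hx0' : (0:ℝ) < x := by linarith
    have hfx : Int.fract x = x := fract_self_of_Ioo ⟨hx0', hx1⟩
    have hfl : (⌊x⌋ : ℝ) = 0 := floor_zero_of_Ioo ⟨hx0', hx1⟩
    have hdel : mhDel h x = -1 := by
      rw [del_eq h hh ⟨hx0', hx1⟩, if_neg (by push_neg; linarith)]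
    have hh1 := hh.1
    have hF : liftMhat h x = 2 * x + (-1 - h) := by
      unfold liftMhat
      rw [hfx, if_neg (show ¬ x < (1-h)/2 by push_neg; linarith),
        if_neg (show ¬ x < 1/2 by push_neg; linarith), hfl]
      ring
    rw [hF, hdel]; ring
  have s1 : ∫ x in (0:ℝ)..(1/2), ψ ((-2) * x + 1)
      = (2⁻¹ : ℝ) * ∫ x in (0:ℝ)..1, ψ x := by
    rw [intervalIntegral.integral_comp_mul_add ψ (show (-2:ℝ) ≠ 0 by norm_num) 1]
    have e3 : ((-2:ℝ) * 0 + 1) = 1 := by ring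
    have e4 : ((-2:ℝ) * (1/2) + 1) = 0 := by ring
    rw [e3, e4, intervalIntegral.integral_symm, smul_eq_mul]
    ring
  have s2 : ∫ x in (1/2:ℝ)..1, ψ (2 * x + (-1 - h))
      = (2⁻¹ : ℝ) * ∫ x in (0:ℝ)..1, ψ x := by
    rw [intervalIntegral.integral_comp_mul_add ψ (show (2:ℝ) ≠ 0 by norm_num) (-1-h)]
    have hper : Function.Periodic ψ 1 := hp
    have e3 : (2 * (1/2:ℝ) + (-1-h)) = -h := by ring
    have e4 : (2 * (1:ℝ) + (-1-h)) = -h + 1 := by ring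
    rw [e3, e4, hper.intervalIntegral_add_eq (-h) 0]
    norm_num [smul_eq_mul]
  have s2' : ∫ x in (1/2:ℝ)..1, -ψ (2 * x + (-1 - h))
      = -((2⁻¹ : ℝ) * ∫ x in (0:ℝ)..1, ψ x) := by
    rw [intervalIntegral.integral_neg, s2]
  rw [hsplit, e1, e2, s1, s2']; ring

lemma invA_iter (h : ℝ) (hh : h ∈ Set.Icc (1/2:ℝ) 1) {ψ : ℝ → ℝ} (hm : Measurable ψ) {C : ℝ}
    (hb : ∀ x, |ψ x| ≤ C) (hp : ∀ x, ψ (x + 1) = ψ x) (k : ℕ) :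
    ∫ x in (0:ℝ)..1, ψ ((liftMhat h)^[k] x) = ∫ x in (0:ℝ)..1, ψ x := by
  induction k with
  | zero => simp
  | succ n ih =>
    have step : ∫ x in (0:ℝ)..1, (fun y => ψ ((liftMhat h)^[n] y)) (liftMhat h x)
        = ∫ x in (0:ℝ)..1, ψ ((liftMhat h)^[n] x) :=
      invA h hh (hm.comp ((mh_meas h).iterate n)) (C := C) (fun x => hb _)
        (fun x => by
          show ψ ((liftMhat h)^[n] (x+1)) = ψ ((liftMhat h)^[n] x)
          rw [mh_iter_add_one, hp])
    calc ∫ x in (0:ℝ)..1, ψ ((liftMhat h)^[n+1] x)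
        = ∫ x in (0:ℝ)..1, (fun y => ψ ((liftMhat h)^[n] y)) (liftMhat h x) := by
          simp only [Function.iterate_succ_apply]
      _ = ∫ x in (0:ℝ)..1, ψ ((liftMhat h)^[n] x) := step
      _ = ∫ x in (0:ℝ)..1, ψ x := ih

lemma int_del_sq (h : ℝ) (hh : h ∈ Set.Icc (1/2:ℝ) 1) :
    ∫ x in (0:ℝ)..1, mhDel h x * mhDel h x = 1 := by
  have : ∫ x in (0:ℝ)..1, mhDel h x * mhDel h x = ∫ x in (0:ℝ)..1, (1:ℝ) := by
    refine integral_congr_Ioo (by norm_num) (fun x hx => ?_)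
    rw [del_eq h hh hx]
    split_ifs <;> norm_num
  rw [this]; simp

lemma ortho_le (h : ℝ) (hh : h ∈ Set.Icc (1/2:ℝ) 1) (k l : ℕ) (hkl : k ≤ l) :
    ∫ x in (0:ℝ)..1, mhDel h ((liftMhat h)^[k] x) * mhDel h ((liftMhat h)^[l] x)
      = if k = l then 1 else 0 := by
  obtain ⟨j, rfl⟩ : ∃ j, l = j + k := ⟨l - k, by omega⟩
  have hdm : Measurable (mhDel h) := del_meas h
  have key : ∀ x, mhDel h ((liftMhat h)^[k] x) * mhDel h ((liftMhat h)^[j+k] x)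
      = (fun y => mhDel h y * mhDel h ((liftMhat h)^[j] y)) ((liftMhat h)^[k] x) := by
    intro x; simp only [Function.iterate_add_apply]
  have hΨm : Measurable fun y => mhDel h y * mhDel h ((liftMhat h)^[j] y) :=
    hdm.mul (hdm.comp ((mh_meas h).iterate j))
  have hΨb : ∀ y, |mhDel h y * mhDel h ((liftMhat h)^[j] y)| ≤ 16 := fun y => by
    rw [abs_mul]
    calc |mhDel h y| * |mhDel h ((liftMhat h)^[j] y)| ≤ 4 * 4 :=
      mul_le_mul (del_bound h hh y) (del_bound h hh _) (abs_nonneg _) (by norm_num)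
    _ = 16 := by norm_num
  have hΨp : ∀ y : ℝ, mhDel h (y+1) * mhDel h ((liftMhat h)^[j] (y+1))
      = mhDel h y * mhDel h ((liftMhat h)^[j] y) := fun y => by
    rw [del_add_one, mh_iter_add_one, del_add_one]
  have step1 : ∫ x in (0:ℝ)..1, mhDel h ((liftMhat h)^[k] x) * mhDel h ((liftMhat h)^[j+k] x)
      = ∫ y in (0:ℝ)..1, mhDel h y * mhDel h ((liftMhat h)^[j] y) := by
    rw [intervalIntegral.integral_congr (fun x _ => key x)]
    exact invA_iter h hh hΨm (C := 16) hΨb hΨp k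
  rw [step1]
  rcases Nat.eq_zero_or_pos j with rfl | hj
  · simp only [Function.iterate_zero, id_eq]
    rw [if_pos (by omega : k = 0 + k)]
    exact int_del_sq h hh
  · obtain ⟨m, rfl⟩ : ∃ m, j = m + 1 := ⟨j - 1, by omega⟩
    have key2 : ∀ y : ℝ, mhDel h y * mhDel h ((liftMhat h)^[m+1] y)
        = mhDel h ((liftMhat h)^[m] (liftMhat h y)) * mhDel h y := by
      intro y; rw [Function.iterate_succ_apply]; ring
    rw [intervalIntegral.integral_congr (fun y _ => key2 y), if_neg (by omega)]
    exact invB h hh (ψ := fun z => mhDel h ((liftMhat h)^[m] z))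
      (hdm.comp ((mh_meas h).iterate m)) (C := 4)
      (fun z => del_bound h hh _) (fun z => by simp only [mh_iter_add_one, del_add_one])

lemma ortho (h : ℝ) (hh : h ∈ Set.Icc (1/2:ℝ) 1) (k l : ℕ) :
    ∫ x in (0:ℝ)..1, mhDel h ((liftMhat h)^[k] x) * mhDel h ((liftMhat h)^[l] x)
      = if k = l then 1 else 0 := by
  rcases le_total k l with hkl | hlk
  · exact ortho_le h hh k l hkl
  · have := ortho_le h hh l k hlk
    have comm : ∀ x, mhDel h ((liftMhat h)^[k] x) * mhDel h ((liftMhat h)^[l] x)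
        = mhDel h ((liftMhat h)^[l] x) * mhDel h ((liftMhat h)^[k] x) := fun x => by ring
    rw [intervalIntegral.integral_congr (fun x _ => comm x), this]
    by_cases hkl : k = l <;> simp [hkl, Ne.symm]

noncomputable def mhS (h : ℝ) (n : ℕ) (x : ℝ) : ℝ :=
  ∑ k ∈ Finset.range n, mhDel h ((liftMhat h)^[k] x)

noncomputable def mhR (h : ℝ) (n : ℕ) (x : ℝ) : ℝ :=
  mhPhi h ((liftMhat h)^[n] x) - mhPhi h x

lemma mhS_meas (h : ℝ) (n : ℕ) : Measurable (mhS h n) :=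
  Finset.measurable_sum _ (fun k _ => (del_meas h).comp ((mh_meas h).iterate k))

lemma mhS_bound (h : ℝ) (hh : h ∈ Set.Icc (1/2:ℝ) 1) (n : ℕ) (x : ℝ) :
    |mhS h n x| ≤ 4 * n := by
  calc |mhS h n x| ≤ ∑ k ∈ Finset.range n, |mhDel h ((liftMhat h)^[k] x)| :=
        Finset.abs_sum_le_sum_abs _ _
    _ ≤ ∑ _k ∈ Finset.range n, (4:ℝ) := Finset.sum_le_sum (fun k _ => del_bound h hh _)
    _ = 4 * n := by simp [mul_comm]

lemma mhR_meas (h : ℝ) (n : ℕ) : Measurable (mhR h n) :=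
  ((phi_meas h).comp ((mh_meas h).iterate n)).sub (phi_meas h)

lemma mhR_bound (h : ℝ) (n : ℕ) (x : ℝ) : |mhR h n x| ≤ 2 := by
  have b1 := phi_bound h ((liftMhat h)^[n] x)
  have b2 := phi_bound h x
  rw [abs_le] at *
  unfold mhR
  constructor <;> linarith [b1.1, b1.2, b2.1, b2.2]

lemma telescope (h : ℝ) (n : ℕ) (x : ℝ) :
    (liftMhat h)^[n] x - x = mhS h n x + mhR h n x := by
  induction n with
  | zero => simp [mhS, mhR]
  | succ n ih =>
    have hs : mhS h (n+1) x = mhS h n x + mhDel h ((liftMhat h)^[n] x) := by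
      unfold mhS; rw [Finset.sum_range_succ]
    have hit : (liftMhat h)^[n+1] x = liftMhat h ((liftMhat h)^[n] x) :=
      Function.iterate_succ_apply' _ _ _
    have hdel : mhDel h ((liftMhat h)^[n] x)
        = liftMhat h ((liftMhat h)^[n] x) - (liftMhat h)^[n] x
          - mhPhi h (liftMhat h ((liftMhat h)^[n] x)) + mhPhi h ((liftMhat h)^[n] x) := rfl
    unfold mhR at ih ⊢
    rw [hs, hit, hdel]
    linarith [ih]

set_option maxHeartbeats 1000000 in
lemma int_S_sq (h : ℝ) (hh : h ∈ Set.Icc (1/2:ℝ) 1) (n : ℕ) :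
    ∫ x in (0:ℝ)..1, (mhS h n x)^2 = n := by
  have expand : ∀ x, (mhS h n x)^2 = ∑ k ∈ Finset.range n, ∑ l ∈ Finset.range n,
      mhDel h ((liftMhat h)^[k] x) * mhDel h ((liftMhat h)^[l] x) := by
    intro x
    rw [sq, mhS, Finset.sum_mul_sum]
  rw [intervalIntegral.integral_congr (fun x _ => expand x)]
  have hint : ∀ k l : ℕ, IntervalIntegrable
      (fun x => mhDel h ((liftMhat h)^[k] x) * mhDel h ((liftMhat h)^[l] x)) volume 0 1 := by
    intro k l
    refine bdd_ii (((del_meas h).comp ((mh_meas h).iterate k)).mul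
      ((del_meas h).comp ((mh_meas h).iterate l))) (C := 16) (fun x => ?_) 0 1
    show |mhDel h ((liftMhat h)^[k] x) * mhDel h ((liftMhat h)^[l] x)| ≤ 16
    rw [abs_mul]
    calc |mhDel h ((liftMhat h)^[k] x)| * |mhDel h ((liftMhat h)^[l] x)| ≤ 4 * 4 :=
        mul_le_mul (del_bound h hh _) (del_bound h hh _) (abs_nonneg _) (by norm_num)
      _ = 16 := by norm_num
  have hint2 : ∀ k : ℕ, IntervalIntegrable (fun x => ∑ l ∈ Finset.range n,
      mhDel h ((liftMhat h)^[k] x) * mhDel h ((liftMhat h)^[l] x)) volume 0 1 := by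
    intro k
    refine bdd_ii (Finset.measurable_sum _ (fun l _ =>
      (((del_meas h).comp ((mh_meas h).iterate k)).mul
        ((del_meas h).comp ((mh_meas h).iterate l))))) (C := 16 * n) (fun x => ?_) 0 1
    calc |∑ l ∈ Finset.range n, mhDel h ((liftMhat h)^[k] x) * mhDel h ((liftMhat h)^[l] x)|
        ≤ ∑ l ∈ Finset.range n, |mhDel h ((liftMhat h)^[k] x) * mhDel h ((liftMhat h)^[l] x)| :=
          Finset.abs_sum_le_sum_abs _ _
      _ ≤ ∑ _l ∈ Finset.range n, (16:ℝ) := by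
          refine Finset.sum_le_sum (fun l _ => ?_)
          rw [abs_mul]
          calc |mhDel h ((liftMhat h)^[k] x)| * |mhDel h ((liftMhat h)^[l] x)| ≤ 4 * 4 :=
              mul_le_mul (del_bound h hh _) (del_bound h hh _) (abs_nonneg _) (by norm_num)
            _ = 16 := by norm_num
      _ = 16 * n := by simp [mul_comm]
  rw [intervalIntegral.integral_finset_sum
    (f := fun k x => ∑ l ∈ Finset.range n,
      mhDel h ((liftMhat h)^[k] x) * mhDel h ((liftMhat h)^[l] x))
    (fun k _ => hint2 k)]
  have e5 : ∀ k ∈ Finset.range n,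
      (∫ x in (0:ℝ)..1, ∑ l ∈ Finset.range n,
        mhDel h ((liftMhat h)^[k] x) * mhDel h ((liftMhat h)^[l] x))
      = ∑ l ∈ Finset.range n, if k = l then (1:ℝ) else 0 := by
    intro k _
    rw [intervalIntegral.integral_finset_sum
      (f := fun l x => mhDel h ((liftMhat h)^[k] x) * mhDel h ((liftMhat h)^[l] x))
      (fun l _ => hint k l)]
    exact Finset.sum_congr rfl (fun l _ => ortho h hh k l)
  rw [Finset.sum_congr rfl e5]
  have e6 : ∀ k ∈ Finset.range n,
      (∑ l ∈ Finset.range n, if k = l then (1:ℝ) else 0) = 1 := by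
    intro k hk
    rw [Finset.sum_ite_eq]
    exact if_pos hk
  rw [Finset.sum_congr rfl e6]
  simp

lemma sq_abs_le {f : ℝ → ℝ} {C : ℝ} (hb : ∀ x, |f x| ≤ C) (x : ℝ) : |(f x)^2| ≤ C^2 := by
  have h0 : 0 ≤ |f x| := abs_nonneg _
  have := hb x
  rw [abs_of_nonneg (sq_nonneg (f x))]
  calc (f x)^2 = |f x|^2 := (sq_abs _).symm
    _ ≤ C^2 := by nlinarith

lemma int_main (h : ℝ) (hh : h ∈ Set.Icc (1/2:ℝ) 1) (n : ℕ) :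
    ∫ x in (0:ℝ)..1, ((liftMhat h)^[n] x - x)^2
      = (n:ℝ) + ∫ x in (0:ℝ)..1, (2 * mhS h n x * mhR h n x + (mhR h n x)^2) := by
  have hcong : ∀ x, ((liftMhat h)^[n] x - x)^2
      = (mhS h n x)^2 + (2 * mhS h n x * mhR h n x + (mhR h n x)^2) := by
    intro x; rw [telescope h n x]; ring
  rw [intervalIntegral.integral_congr (fun x _ => hcong x)]
  have hi1 : IntervalIntegrable (fun x => (mhS h n x)^2) volume 0 1 :=
    bdd_ii ((mhS_meas h n).pow measurable_const) (C := (4*n)^2)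
      (sq_abs_le (mhS_bound h hh n)) 0 1
  have hi2 : IntervalIntegrable
      (fun x => 2 * mhS h n x * mhR h n x + (mhR h n x)^2) volume 0 1 := by
    refine bdd_ii (((measurable_const.mul (mhS_meas h n)).mul (mhR_meas h n)).add
      ((mhR_meas h n).pow measurable_const)) (C := 2 * (4*n) * 2 + 4) (fun x => ?_) 0 1
    have b1 := mhS_bound h hh n x
    have b2 := mhR_bound h n x
    have h1 : |2 * mhS h n x * mhR h n x| ≤ 2 * (4*n) * 2 := by
      rw [abs_mul, abs_mul, abs_two]
      have : (0:ℝ) ≤ |mhS h n x| := abs_nonneg _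
      nlinarith [abs_nonneg (mhR h n x)]
    have h2 : |(mhR h n x)^2| ≤ 4 := by
      have := sq_abs_le (f := mhR h n) (C := 2) (mhR_bound h n) x
      linarith
    calc |2 * mhS h n x * mhR h n x + (mhR h n x)^2|
        ≤ |2 * mhS h n x * mhR h n x| + |(mhR h n x)^2| := abs_add_le _ _
      _ ≤ 2 * (4*n) * 2 + 4 := by linarith
  rw [intervalIntegral.integral_add hi1 hi2, int_S_sq h hh n]

theorem stmt19 (h : ℝ) (hh : h ∈ Set.Icc (1/2:ℝ) 1) :
    Tendsto (fun n : ℕ => (1/(2*(n:ℝ))) * ∫ x in (0:ℝ)..1, ((liftMhat h)^[n] x - x)^2)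
      atTop (nhds (1/2)) := by
  have hEbound : ∀ n : ℕ, 1 ≤ n →
      |∫ x in (0:ℝ)..1, (2 * mhS h n x * mhR h n x + (mhR h n x)^2)|
        ≤ 4 * Real.sqrt n + 4 := by
    intro n hn
    set t := Real.sqrt n with htdef
    have htpos : 0 < t := Real.sqrt_pos.mpr (by exact_mod_cast hn)
    have ht2 : t * t = n := Real.mul_self_sqrt (by positivity)
    have hptwise : ∀ x, |2 * mhS h n x * mhR h n x + (mhR h n x)^2|
        ≤ (2/t) * (mhS h n x)^2 + (2*t + 4) := by
      intro x
      have b2 := mhR_bound h n x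
      have b2' := abs_le.mp b2
      have hs : |2 * mhS h n x * mhR h n x| ≤ 4 * |mhS h n x| := by
        rw [abs_mul, abs_mul, abs_two]
        nlinarith [abs_nonneg (mhS h n x)]
      have hkey : 4 * |mhS h n x| ≤ (2/t) * (mhS h n x)^2 + 2*t := by
        have habs2 : |mhS h n x|^2 = (mhS h n x)^2 := sq_abs _
        have hsq : 0 ≤ (|mhS h n x| - t)^2 := sq_nonneg _
        have h1 : 2 * t * |mhS h n x| ≤ (mhS h n x)^2 + t^2 := by nlinarith
        have h2t : (2/t) * (mhS h n x)^2 + 2*t - 4 * |mhS h n x|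
            = (2/t) * ((mhS h n x)^2 + t^2 - 2 * t * |mhS h n x|) := by
          field_simp; ring
        have hprod : 0 ≤ (2/t) * ((mhS h n x)^2 + t^2 - 2 * t * |mhS h n x|) :=
          mul_nonneg (by positivity) (by linarith)
        linarith
      have hr2 : (mhR h n x)^2 ≤ 4 := by nlinarith [b2'.1, b2'.2]
      calc |2 * mhS h n x * mhR h n x + (mhR h n x)^2|
          ≤ |2 * mhS h n x * mhR h n x| + |(mhR h n x)^2| := abs_add_le _ _
        _ ≤ 4 * |mhS h n x| + 4 := by
            rw [abs_of_nonneg (sq_nonneg (mhR h n x))]; linarith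
        _ ≤ ((2/t) * (mhS h n x)^2 + 2*t) + 4 := by linarith
        _ = (2/t) * (mhS h n x)^2 + (2*t + 4) := by ring
    have hfm : Measurable (fun x => 2 * mhS h n x * mhR h n x + (mhR h n x)^2) :=
      ((measurable_const.mul (mhS_meas h n)).mul (mhR_meas h n)).add
        ((mhR_meas h n).pow measurable_const)
    have hfb : ∀ x, |2 * mhS h n x * mhR h n x + (mhR h n x)^2|
        ≤ 2 * (4*(n:ℝ)) * 2 + 4 := by
      intro x
      have b1 := mhS_bound h hh n x
      have b2 := mhR_bound h n x
      have h1 : |2 * mhS h n x * mhR h n x| ≤ 2 * (4*(n:ℝ)) * 2 := by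
        rw [abs_mul, abs_mul, abs_two]
        nlinarith [abs_nonneg (mhS h n x), abs_nonneg (mhR h n x)]
      have h2 : |(mhR h n x)^2| ≤ 4 := by
        have := sq_abs_le (f := mhR h n) (C := 2) (mhR_bound h n) x
        linarith
      calc |2 * mhS h n x * mhR h n x + (mhR h n x)^2|
          ≤ |2 * mhS h n x * mhR h n x| + |(mhR h n x)^2| := abs_add_le _ _
        _ ≤ 2 * (4*(n:ℝ)) * 2 + 4 := by linarith
    have hfai : IntervalIntegrable
        (fun x => |2 * mhS h n x * mhR h n x + (mhR h n x)^2|) volume 0 1 :=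
      bdd_ii hfm.abs (C := 2 * (4*(n:ℝ)) * 2 + 4) (fun x => by
        rw [abs_abs]; exact hfb x) 0 1
    have hi1 : IntervalIntegrable (fun x => (mhS h n x)^2) volume 0 1 :=
      bdd_ii ((mhS_meas h n).pow measurable_const) (C := (4*n)^2)
        (sq_abs_le (mhS_bound h hh n)) 0 1
    have hgi : IntervalIntegrable
        (fun x => (2/t) * (mhS h n x)^2 + (2*t + 4)) volume 0 1 :=
      (hi1.const_mul _).add intervalIntegrable_const
    have step1 : |∫ x in (0:ℝ)..1, (2 * mhS h n x * mhR h n x + (mhR h n x)^2)|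
        ≤ ∫ x in (0:ℝ)..1, |2 * mhS h n x * mhR h n x + (mhR h n x)^2| :=
      intervalIntegral.abs_integral_le_integral_abs (by norm_num)
    have step2 : (∫ x in (0:ℝ)..1, |2 * mhS h n x * mhR h n x + (mhR h n x)^2|)
        ≤ ∫ x in (0:ℝ)..1, ((2/t) * (mhS h n x)^2 + (2*t + 4)) :=
      intervalIntegral.integral_mono_on (by norm_num) hfai hgi (fun x _ => hptwise x)
    have step3 : (∫ x in (0:ℝ)..1, ((2/t) * (mhS h n x)^2 + (2*t + 4)))
        = 4 * t + 4 := by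
      rw [intervalIntegral.integral_add (hi1.const_mul _) intervalIntegrable_const,
        intervalIntegral.integral_const_mul, int_S_sq h hh n,
        intervalIntegral.integral_const]
      have he : (2/t) * (n:ℝ) = 2 * t := by
        rw [← ht2]; field_simp
      rw [he]
      simp only [smul_eq_mul]
      ring
    linarith
  have hsqrt : Tendsto (fun n : ℕ => Real.sqrt n) atTop atTop := by
    apply tendsto_atTop_atTop.mpr
    intro b
    refine ⟨Nat.ceil (b*b), fun n hn => ?_⟩
    rcases le_or_gt b 0 with hb | hb
    · exact hb.trans (Real.sqrt_nonneg _)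
    · have hbb : b*b ≤ (n:ℝ) := le_trans (Nat.le_ceil _) (by exact_mod_cast hn)
      calc b = Real.sqrt (b*b) := (Real.sqrt_mul_self hb.le).symm
        _ ≤ Real.sqrt n := Real.sqrt_le_sqrt hbb
  have hlim : Tendsto (fun n : ℕ => 4 / Real.sqrt n) atTop (nhds 0) :=
    Tendsto.div_atTop tendsto_const_nhds hsqrt
  have habs : ∀ᶠ n : ℕ in atTop,
      ‖(1/(2*(n:ℝ))) * (∫ x in (0:ℝ)..1, ((liftMhat h)^[n] x - x)^2) - 1/2‖
        ≤ 4 / Real.sqrt n := by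
    filter_upwards [eventually_ge_atTop 1] with n hn
    have hnpos : (0:ℝ) < n := by exact_mod_cast hn
    have ht2 : Real.sqrt n * Real.sqrt n = n := Real.mul_self_sqrt (by positivity)
    have htpos : 0 < Real.sqrt n := Real.sqrt_pos.mpr hnpos
    have hts1 : 1 ≤ Real.sqrt n := by
      have h1 : Real.sqrt 1 ≤ Real.sqrt n := Real.sqrt_le_sqrt (by exact_mod_cast hn)
      simpa using h1
    have hEq : (1/(2*(n:ℝ))) * (∫ x in (0:ℝ)..1, ((liftMhat h)^[n] x - x)^2) - 1/2
        = (∫ x in (0:ℝ)..1, (2 * mhS h n x * mhR h n x + (mhR h n x)^2)) / (2*(n:ℝ)) := by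
      rw [int_main h hh n]
      field_simp
      ring
    rw [hEq, Real.norm_eq_abs, abs_div, abs_of_pos (show (0:ℝ) < 2*(n:ℝ) by positivity)]
    have hEb := hEbound n hn
    have h8 : |∫ x in (0:ℝ)..1, (2 * mhS h n x * mhR h n x + (mhR h n x)^2)|
        ≤ 8 * Real.sqrt n := by
      have h4 : (4:ℝ) ≤ 4 * Real.sqrt n := by linarith
      linarith
    calc |∫ x in (0:ℝ)..1, (2 * mhS h n x * mhR h n x + (mhR h n x)^2)| / (2*(n:ℝ))
        ≤ (8 * Real.sqrt n) / (2*(n:ℝ)) := by gcongr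
      _ = 4 / Real.sqrt n := by
          have hn' : (n:ℝ) = Real.sqrt n * Real.sqrt n := ht2.symm
          rw [hn']
          field_simp
          rw [Real.sqrt_sq htpos.le]; ring
  have hzero : Tendsto (fun n : ℕ =>
      (1/(2*(n:ℝ))) * (∫ x in (0:ℝ)..1, ((liftMhat h)^[n] x - x)^2) - 1/2)
      atTop (nhds 0) := squeeze_zero_norm' habs hlim
  have hfinal := hzero.add_const (1/2)
  rw [zero_add] at hfinal
  convert hfinal using 2 with n
  ring
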